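/- Let q > 2 be odd. For every n ≥ 1: if q does not divide n+1 then f_{2,q}(n+1) = f_{2,q}(n), and if q divides n+1 then f_{2,q}(n+1) = f_{2,q}(n) + f_{2,q}((n+1)/q). -/

import Mathlib

open Filter Real

/-- Number of representations of `n` as a sum of distinct terms of the form `p^a * q^b`. -/
noncomputable def fpq (p q n : ℕ) : ℕ :=
  Set.ncard {S : Finset ℕ | (∀ k ∈ S, ∃ a b : ℕ, k = p ^ a * q ^ b) ∧ S.sum id = n}

namespace FpqAux

/-- The finset of powers of two summing to `t`. -/
def twoPow (t : ℕ) : Finset ℕ := t.bitIndices.toFinset.image (2 ^ ·)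

lemma sum_twoPow (t : ℕ) : (twoPow t).sum id = t := by
  rw [twoPow, Finset.sum_image]
  · simpa using Finset.Nat.twoPowSum_toFinset_bitIndices t
  · intro x _ y _ h
    exact Nat.pow_right_injective (le_refl 2) h

lemma mem_twoPow {t k : ℕ} (h : k ∈ twoPow t) : ∃ a, k = 2 ^ a := by
  simp only [twoPow, Finset.mem_image] at h
  obtain ⟨a, -, rfl⟩ := h
  exact ⟨a, rfl⟩

lemma pows_eq_image (A : Finset ℕ) (h : ∀ k ∈ A, ∃ a, k = 2 ^ a) :
    (A.image (Nat.log 2)).image (2 ^ ·) = A := by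
  rw [Finset.image_image]
  have : ∀ k ∈ A, ((2 ^ ·) ∘ Nat.log 2) k = id k := by
    intro k hk
    obtain ⟨a, rfl⟩ := h k hk
    simp [Nat.log_pow]
  rw [Finset.image_congr this, Finset.image_id]

lemma log_injOn (A : Finset ℕ) (h : ∀ k ∈ A, ∃ a, k = 2 ^ a) :
    ∀ x ∈ A, ∀ y ∈ A, Nat.log 2 x = Nat.log 2 y → x = y := by
  intro x hx y hy hxy
  obtain ⟨a, rfl⟩ := h x hx
  obtain ⟨b, rfl⟩ := h y hy
  rw [Nat.log_pow (by norm_num), Nat.log_pow (by norm_num)] at hxy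
  rw [hxy]

lemma sum_pows (A : Finset ℕ) (h : ∀ k ∈ A, ∃ a, k = 2 ^ a) :
    ∑ i ∈ A.image (Nat.log 2), 2 ^ i = A.sum id := by
  rw [Finset.sum_image (log_injOn A h)]
  apply Finset.sum_congr rfl
  intro k hk
  obtain ⟨a, rfl⟩ := h k hk
  simp [Nat.log_pow]

/-- Binary uniqueness: a finset of powers of two is determined by its sum. -/
lemma pows_eq_of_sum_eq {A₁ A₂ : Finset ℕ} (h₁ : ∀ k ∈ A₁, ∃ a, k = 2 ^ a)
    (h₂ : ∀ k ∈ A₂, ∃ a, k = 2 ^ a) (hs : A₁.sum id = A₂.sum id) : A₁ = A₂ := by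
  have hE : A₁.image (Nat.log 2) = A₂.image (Nat.log 2) := by
    apply Finset.geomSum_injective (le_refl 2)
    simp only [sum_pows A₁ h₁, sum_pows A₂ h₂, hs]
  rw [← pows_eq_image A₁ h₁, ← pows_eq_image A₂ h₂, hE]

lemma twoPow_eq {A : Finset ℕ} (h : ∀ k ∈ A, ∃ a, k = 2 ^ a) : A = twoPow (A.sum id) :=
  pows_eq_of_sum_eq h (fun k hk => mem_twoPow hk) (by rw [sum_twoPow])

variable {q : ℕ}

lemma not_dvd_two_pow (hq : 2 < q) (hodd : Odd q) (a : ℕ) : ¬ q ∣ 2 ^ a := by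
  intro h
  have hc : Nat.Coprime q 2 := Nat.coprime_two_right.mpr hodd
  have h1 := (hc.pow_right a).eq_one_of_dvd h
  omega

lemma pow_two_of_not_dvd (hq : 2 < q) (hodd : Odd q) {k : ℕ}
    (h : ∃ a b : ℕ, k = 2 ^ a * q ^ b) (hk : ¬ q ∣ k) : ∃ a, k = 2 ^ a := by
  obtain ⟨a, b, rfl⟩ := h
  cases b with
  | zero => exact ⟨a, by simp⟩
  | succ b => exact absurd (Dvd.intro (2 ^ a * q ^ b) (by ring)) hk

lemma dvd_part (hq : 2 < q) (hodd : Odd q) {k : ℕ}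
    (h : ∃ a b : ℕ, k = 2 ^ a * q ^ b) (hk : q ∣ k) :
    ∃ a b : ℕ, k / q = 2 ^ a * q ^ b := by
  obtain ⟨a, b, rfl⟩ := h
  cases b with
  | zero =>
    exfalso
    exact not_dvd_two_pow hq hodd a (by simpa using hk)
  | succ b =>
    refine ⟨a, b, ?_⟩
    have : 2 ^ a * q ^ (b + 1) = (2 ^ a * q ^ b) * q := by ring
    rw [this, Nat.mul_div_assoc _ (dvd_refl q), Nat.div_self (by omega : 0 < q), mul_one]

/-- The set of representations of `n`. -/
def T (q n : ℕ) : Set (Finset ℕ) :=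
  {S : Finset ℕ | (∀ k ∈ S, ∃ a b : ℕ, k = 2 ^ a * q ^ b) ∧ S.sum id = n}

lemma finite_T (q n : ℕ) : (T q n).Finite := by
  apply Set.Finite.subset ((Finset.range (n + 1)).powerset.finite_toSet)
  intro S hS
  obtain ⟨-, hsum⟩ := hS
  simp only [Finset.coe_powerset, Set.mem_preimage, Set.mem_powerset_iff,
    Finset.coe_range]
  intro k hk
  have : k ≤ S.sum id := Finset.single_le_sum (f := id) (fun i _ => Nat.zero_le i) hk
  simp only [Set.mem_Iio]
  omega

lemma fpq_eq (q n : ℕ) : fpq 2 q n = (finite_T q n).toFinset.card :=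
  Set.ncard_eq_toFinset_card _ (finite_T q n)

lemma key (hq : 2 < q) (hodd : Odd q) (n : ℕ) :
    fpq 2 q n = ∑ m ∈ Finset.range (n / q + 1), fpq 2 q m := by
  classical
  have hq0 : 0 < q := by omega
  rw [fpq_eq]
  rw [Finset.sum_congr rfl (fun m _ => fpq_eq q m), ← Finset.card_sigma]
  -- basic facts about the decomposition
  set Bf : Finset ℕ → Finset ℕ := fun S => (S.filter (fun k => q ∣ k)).image (· / q) with hBf
  have hfilter_eq : ∀ S : Finset ℕ, (Bf S).image (fun x => q * x) = S.filter (fun k => q ∣ k) := by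
    intro S
    rw [hBf, Finset.image_image]
    have : ∀ k ∈ S.filter (fun k => q ∣ k), ((fun x => q * x) ∘ (· / q)) k = id k := by
      intro k hk
      have hdvd : q ∣ k := (Finset.mem_filter.mp hk).2
      simp [Nat.mul_div_cancel' hdvd]
    rw [Finset.image_congr this, Finset.image_id]
  have hsumB : ∀ S : Finset ℕ, q * (Bf S).sum id = (S.filter (fun k => q ∣ k)).sum id := by
    intro S
    rw [hBf]
    rw [Finset.sum_image]
    · rw [Finset.mul_sum]
      apply Finset.sum_congr rfl
      intro k hk
      exact Nat.mul_div_cancel' (Finset.mem_filter.mp hk).2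
    · intro x hx y hy hxy
      have hdx : q ∣ x := (Finset.mem_filter.mp hx).2
      have hdy : q ∣ y := (Finset.mem_filter.mp hy).2
      rw [← Nat.mul_div_cancel' hdx, ← Nat.mul_div_cancel' hdy, show x / q = y / q from hxy]
  apply Finset.card_bij (fun S _ => (⟨(Bf S).sum id, Bf S⟩ : Σ _ : ℕ, Finset ℕ))
  · -- maps into the target
    intro S hS
    rw [Set.Finite.mem_toFinset] at hS
    obtain ⟨hval, hsum⟩ := hS
    have hsplit : (S.filter (fun k => q ∣ k)).sum id
        + (S.filter (fun k => ¬ q ∣ k)).sum id = S.sum id :=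
      Finset.sum_filter_add_sum_filter_not S _ id
    have hle : q * (Bf S).sum id ≤ n := by
      rw [hsumB S]; omega
    rw [Finset.mem_sigma, Set.Finite.mem_toFinset]
    dsimp only
    constructor
    · rw [Finset.mem_range]
      have : (Bf S).sum id ≤ n / q :=
        Nat.le_div_iff_mul_le hq0 |>.mpr (by rw [mul_comm]; omega)
      omega
    · refine ⟨?_, rfl⟩
      intro k hk
      rw [hBf] at hk
      simp only [Finset.mem_image, Finset.mem_filter] at hk
      obtain ⟨k', ⟨hk'S, hk'd⟩, rfl⟩ := hk
      exact dvd_part hq hodd (hval k' hk'S) hk'd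
  · -- injectivity
    intro S₁ hS₁ S₂ hS₂ h
    rw [Set.Finite.mem_toFinset] at hS₁ hS₂
    obtain ⟨hval₁, hsum₁⟩ := hS₁
    obtain ⟨hval₂, hsum₂⟩ := hS₂
    have hB : Bf S₁ = Bf S₂ := congrArg Sigma.snd h
    have hApows : ∀ (S : Finset ℕ), (∀ k ∈ S, ∃ a b : ℕ, k = 2 ^ a * q ^ b) →
        ∀ k ∈ S.filter (fun k => ¬ q ∣ k), ∃ a, k = 2 ^ a := by
      intro S hval k hk
      obtain ⟨hkS, hkd⟩ := Finset.mem_filter.mp hk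
      exact pow_two_of_not_dvd hq hodd (hval k hkS) hkd
    have hA : ∀ (S : Finset ℕ), (∀ k ∈ S, ∃ a b : ℕ, k = 2 ^ a * q ^ b) → S.sum id = n →
        S.filter (fun k => ¬ q ∣ k) = twoPow (n - q * (Bf S).sum id) := by
      intro S hval hsum
      have h1 := twoPow_eq (hApows S hval)
      have hsplit : (S.filter (fun k => q ∣ k)).sum id
          + (S.filter (fun k => ¬ q ∣ k)).sum id = S.sum id :=
        Finset.sum_filter_add_sum_filter_not S _ id
      have h2 : (S.filter (fun k => ¬ q ∣ k)).sum id = n - q * (Bf S).sum id := by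
        rw [hsumB S]; omega
      rw [h1, h2]
    have hrec : ∀ (S : Finset ℕ),
        S = S.filter (fun k => ¬ q ∣ k) ∪ (Bf S).image (fun x => q * x) := by
      intro S
      rw [hfilter_eq S, Finset.union_comm, Finset.filter_union_filter_not_eq]
    rw [hrec S₁, hrec S₂, hA S₁ hval₁ hsum₁, hA S₂ hval₂ hsum₂, hB]
  · -- surjectivity
    rintro ⟨m, B⟩ hmB
    rw [Finset.mem_sigma, Finset.mem_range, Set.Finite.mem_toFinset] at hmB
    dsimp only at hmB
    obtain ⟨hm, hBval, hBsum⟩ := hmB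
    have hqm : q * m ≤ n := by
      rw [mul_comm]
      exact Nat.le_div_iff_mul_le hq0 |>.mp (by omega)
    set S : Finset ℕ := twoPow (n - q * m) ∪ B.image (fun x => q * x) with hSdef
    have hdisj : Disjoint (twoPow (n - q * m)) (B.image (fun x => q * x)) := by
      rw [Finset.disjoint_left]
      intro k hk hk'
      obtain ⟨a, rfl⟩ := mem_twoPow hk
      simp only [Finset.mem_image] at hk'
      obtain ⟨x, -, hx⟩ := hk'
      exact not_dvd_two_pow hq hodd a ⟨x, hx.symm⟩
    have hsum_image : (B.image (fun x => q * x)).sum id = q * m := by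
      rw [Finset.sum_image (fun x _ y _ h => Nat.eq_of_mul_eq_mul_left hq0 h)]
      rw [← hBsum, Finset.mul_sum]
      rfl
    have hSsum : S.sum id = n := by
      rw [hSdef, Finset.sum_union hdisj, sum_twoPow, hsum_image]
      omega
    have hSval : ∀ k ∈ S, ∃ a b : ℕ, k = 2 ^ a * q ^ b := by
      intro k hk
      rw [hSdef, Finset.mem_union] at hk
      rcases hk with hk | hk
      · obtain ⟨a, rfl⟩ := mem_twoPow hk
        exact ⟨a, 0, by simp⟩
      · simp only [Finset.mem_image] at hk
        obtain ⟨x, hxB, rfl⟩ := hk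
        obtain ⟨a, b, rfl⟩ := hBval x hxB
        exact ⟨a, b + 1, by ring⟩
    refine ⟨S, Set.Finite.mem_toFinset _ |>.mpr ⟨hSval, hSsum⟩, ?_⟩
    have hSfilter : S.filter (fun k => q ∣ k) = B.image (fun x => q * x) := by
      rw [hSdef, Finset.filter_union]
      have h1 : (twoPow (n - q * m)).filter (fun k => q ∣ k) = ∅ := by
        rw [Finset.filter_eq_empty_iff]
        intro k hk
        obtain ⟨a, rfl⟩ := mem_twoPow hk
        exact not_dvd_two_pow hq hodd a
      have h2 : (B.image (fun x => q * x)).filter (fun k => q ∣ k)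
          = B.image (fun x => q * x) := by
        rw [Finset.filter_eq_self]
        intro k hk
        simp only [Finset.mem_image] at hk
        obtain ⟨x, -, rfl⟩ := hk
        exact Dvd.intro x rfl
      rw [h1, h2, Finset.empty_union]
    have hBS : Bf S = B := by
      rw [hBf]
      simp only
      rw [hSfilter, Finset.image_image]
      have : ∀ x ∈ B, ((· / q) ∘ (fun x => q * x)) x = id x := by
        intro x hx
        simp [Nat.mul_div_cancel_left x hq0]
      rw [Finset.image_congr this, Finset.image_id]
    rw [hBS, hBsum]

end FpqAux

theorem stmt5 (q : ℕ) (hq : 2 < q) (hodd : Odd q) (n : ℕ) (hn : 1 ≤ n) :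
    (¬ q ∣ (n + 1) → fpq 2 q (n + 1) = fpq 2 q n) ∧
    (q ∣ (n + 1) → fpq 2 q (n + 1) = fpq 2 q n + fpq 2 q ((n + 1) / q)) := by
  have h1 := FpqAux.key hq hodd (n + 1)
  have h2 := FpqAux.key hq hodd n
  have hsd : (n + 1) / q = n / q + if q ∣ n + 1 then 1 else 0 := Nat.succ_div
  constructor
  · intro hdvd
    rw [if_neg hdvd, add_zero] at hsd
    rw [h1, h2, hsd]
  · intro hdvd
    rw [if_pos hdvd] at hsd
    rw [h1, h2, hsd, Finset.sum_range_succ, ← hsd]
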